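/- Let D be a dictionary with μ₁(D) < 1/3 and 1 ≤ p < 2. Then there exist constants C₁ = C₁(p) > 0 and C₂ = C₂(μ₁(D)) > 0 such that for every f ∈ A^p(D) and every m ≥ 1, ‖f − G_m^{PGA}(f,D)‖ ≤ C₁ C₂ |f|_p m^{-1/p + 1/2}. -/

import Mathlib

open RealInnerProductSpace Finset

/-- The set of finite linear combinations `Σ_{g∈S} c_g g` of distinct
dictionary elements with `Σ_{g∈S} |c_g|^p ≤ M^p`. -/
def repSet {H : Type*} [NormedAddCommGroup H] [InnerProductSpace ℝ H]
    (D : Set H) (p M : ℝ) : Set H :=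
  {h | ∃ (S : Finset H) (c : H → ℝ), ↑S ⊆ D ∧
    (∑ g ∈ S, |c g| ^ p) ≤ M ^ p ∧ h = ∑ g ∈ S, c g • g}

/-- The class `A^p(D, M)` is the closure of `repSet D p M`. -/
def Aclass {H : Type*} [NormedAddCommGroup H] [InnerProductSpace ℝ H]
    (D : Set H) (p M : ℝ) : Set H :=
  closure (repSet D p M)

/-- The semi-norm `|f|_p = inf {M ≥ 0 : f ∈ A^p(D, M)}`. -/
noncomputable def Anorm {H : Type*} [NormedAddCommGroup H]
    [InnerProductSpace ℝ H] (D : Set H) (p : ℝ) (f : H) : ℝ :=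
  sInf {M | 0 ≤ M ∧ f ∈ Aclass D p M}

open scoped Classical




lemma jensen_rpow {ι : Type*} (s : Finset ι) (w x : ι → ℝ) (hw : ∀ i, 0 ≤ w i)
    (hx : ∀ i, 0 ≤ x i) {p : ℝ} (hp : 1 ≤ p) {W : ℝ} (hW : 0 ≤ W)
    (hsw : ∑ i ∈ s, w i ≤ W) :
    (∑ i ∈ s, w i * x i) ^ p ≤ W ^ (p - 1) * ∑ i ∈ s, w i * x i ^ p := by
  have hp0 : (0:ℝ) < p := lt_of_lt_of_le zero_lt_one hp
  have hsum_nonneg : 0 ≤ ∑ i ∈ s, w i := Finset.sum_nonneg fun i _ => hw i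
  have hsx : 0 ≤ ∑ i ∈ s, w i * x i ^ p :=
    Finset.sum_nonneg fun i _ => mul_nonneg (hw i) (Real.rpow_nonneg (hx i) p)
  have key := Real.inner_le_weight_mul_Lp_of_nonneg s hp w x hw hx
  have h1 : (∑ i ∈ s, w i * x i) ^ p ≤
      (((∑ i ∈ s, w i) ^ (1 - p⁻¹)) * ((∑ i ∈ s, w i * x i ^ p) ^ p⁻¹)) ^ p :=
    Real.rpow_le_rpow (Finset.sum_nonneg fun i _ => mul_nonneg (hw i) (hx i)) key hp0.le
  have h2 : (((∑ i ∈ s, w i) ^ (1 - p⁻¹)) * ((∑ i ∈ s, w i * x i ^ p) ^ p⁻¹)) ^ p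
      = ((∑ i ∈ s, w i) ^ (p - 1)) * (∑ i ∈ s, w i * x i ^ p) := by
    rw [Real.mul_rpow (Real.rpow_nonneg hsum_nonneg _) (Real.rpow_nonneg hsx _),
      ← Real.rpow_mul hsum_nonneg, ← Real.rpow_mul hsx]
    have e1 : (1 - p⁻¹) * p = p - 1 := by field_simp
    have e2 : p⁻¹ * p = 1 := by field_simp
    rw [e1, e2, Real.rpow_one]
  calc (∑ i ∈ s, w i * x i) ^ p ≤ ((∑ i ∈ s, w i) ^ (p - 1)) * (∑ i ∈ s, w i * x i ^ p) := by
        rw [← h2]; exact h1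
    _ ≤ W ^ (p - 1) * ∑ i ∈ s, w i * x i ^ p := by
        apply mul_le_mul_of_nonneg_right _ hsx
        exact Real.rpow_le_rpow hsum_nonneg hsw (by linarith)

section Coh
variable {H : Type*} [NormedAddCommGroup H] [InnerProductSpace ℝ H]

-- sum over T ⊆ D, e ∉ T
lemma coh_sum {D : Set H} {μ : ℝ} (hμlt : μ < 1/3)
    (hμ : ∀ g ∈ D, ∀ S : Finset H, ↑S ⊆ D → g ∉ S → ∑ h ∈ S, |⟪h, g⟫| ≤ μ)
    {e : H} (he : e ∈ D) {T : Finset H} (hT : ↑T ⊆ D) (heT : e ∉ T) :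
    ∑ x ∈ T, |⟪x, e⟫| ≤ 1/3 :=
  le_trans (hμ e he T hT heT) (le_of_lt hμlt)

lemma coh_sum_erase {D : Set H} {μ : ℝ} (hμlt : μ < 1/3)
    (hμ : ∀ g ∈ D, ∀ S : Finset H, ↑S ⊆ D → g ∉ S → ∑ h ∈ S, |⟪h, g⟫| ≤ μ)
    {e : H} (he : e ∈ D) {T : Finset H} (hT : ↑T ⊆ D) :
    ∑ x ∈ T.erase e, |⟪x, e⟫| ≤ 1/3 :=
  coh_sum hμlt hμ he (Set.Subset.trans (Finset.coe_subset.mpr (Finset.erase_subset e T)) hT)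
    (Finset.notMem_erase e T)

lemma rowsum_le {D : Set H} (hDnorm : ∀ g ∈ D, ‖g‖ = 1) {μ : ℝ} (hμlt : μ < 1/3)
    (hμ : ∀ g ∈ D, ∀ S : Finset H, ↑S ⊆ D → g ∉ S → ∑ h ∈ S, |⟪h, g⟫| ≤ μ)
    {e : H} (he : e ∈ D) {T : Finset H} (hT : ↑T ⊆ D) :
    ∑ x ∈ T, |⟪x, e⟫| ≤ 4/3 := by
  by_cases heT : e ∈ T
  · have h1 : ∑ x ∈ T.erase e, |⟪x, e⟫| + |⟪e, e⟫| = ∑ x ∈ T, |⟪x, e⟫| :=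
      Finset.sum_erase_add T _ heT
    have h2 : |⟪e, e⟫| = 1 := by
      rw [real_inner_self_eq_norm_mul_norm, hDnorm e he]; norm_num
    have := coh_sum_erase hμlt hμ he hT (T := T)
    linarith
  · have := coh_sum hμlt hμ he hT heT
    linarith

-- symmetric version
lemma rowsum_le' {D : Set H} (hDnorm : ∀ g ∈ D, ‖g‖ = 1) {μ : ℝ} (hμlt : μ < 1/3)
    (hμ : ∀ g ∈ D, ∀ S : Finset H, ↑S ⊆ D → g ∉ S → ∑ h ∈ S, |⟪h, g⟫| ≤ μ)
    {e : H} (he : e ∈ D) {T : Finset H} (hT : ↑T ⊆ D) :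
    ∑ x ∈ T, |⟪e, x⟫| ≤ 4/3 := by
  calc ∑ x ∈ T, |⟪e, x⟫| = ∑ x ∈ T, |⟪x, e⟫| :=
        Finset.sum_congr rfl fun x _ => by rw [real_inner_comm]
    _ ≤ 4/3 := rowsum_le hDnorm hμlt hμ he hT

lemma erase_swap {α : Type*} [DecidableEq α] (S : Finset α) (F : α → α → ℝ) :
    ∑ g ∈ S, ∑ h ∈ S.erase g, F g h = ∑ h ∈ S, ∑ g ∈ S.erase h, F g h := by
  have key : ∀ (a b : α), a ∈ S → b ∈ S →
      (if b ≠ a then F a b else 0) = (if a ≠ b then F a b else 0) := by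
    intro a b _ _; by_cases hab : a = b <;> simp [hab, Ne, eq_comm]
  calc ∑ g ∈ S, ∑ h ∈ S.erase g, F g h
      = ∑ g ∈ S, ∑ h ∈ S, if h ≠ g then F g h else 0 := by
        refine Finset.sum_congr rfl fun g _ => ?_
        rw [← Finset.filter_ne' S g, Finset.sum_filter]
    _ = ∑ h ∈ S, ∑ g ∈ S, if h ≠ g then F g h else 0 := Finset.sum_comm
    _ = ∑ h ∈ S, ∑ g ∈ S.erase h, F g h := by
        refine Finset.sum_congr rfl fun h hh => ?_
        rw [← Finset.filter_ne' S h, Finset.sum_filter]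
        exact Finset.sum_congr rfl fun g hg => (key g h hg hh)

end Coh

section B
variable {H : Type*} [NormedAddCommGroup H] [InnerProductSpace ℝ H]

lemma coh_sum' {D : Set H} {μ : ℝ} (hμlt : μ < 1/3)
    (hμ : ∀ g ∈ D, ∀ S : Finset H, ↑S ⊆ D → g ∉ S → ∑ h ∈ S, |⟪h, g⟫| ≤ μ)
    {e : H} (he : e ∈ D) {T : Finset H} (hT : ↑T ⊆ D) (heT : e ∉ T) :
    ∑ x ∈ T, |⟪x, e⟫| ≤ 1/3 := le_trans (hμ e he T hT heT) (le_of_lt hμlt)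

lemma bessel {D : Set H} (hDnorm : ∀ g ∈ D, ‖g‖ = 1) {μ : ℝ} (hμlt : μ < 1/3)
    (hμ : ∀ g ∈ D, ∀ S : Finset H, ↑S ⊆ D → g ∉ S → ∑ h ∈ S, |⟪h, g⟫| ≤ μ)
    (v : H) {S : Finset H} (hS : ↑S ⊆ D) :
    ∑ g ∈ S, ⟪v, g⟫ ^ 2 ≤ (4/3) * ‖v‖ ^ 2 := by
  have erS : ∀ g ∈ S, (↑(S.erase g) : Set H) ⊆ D :=
    fun g _ => Set.Subset.trans (Finset.coe_subset.mpr (Finset.erase_subset g S)) hS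
  have hrow : ∀ g ∈ S, ∑ h ∈ S.erase g, |⟪g, h⟫| ≤ 1/3 := by
    intro g hg
    calc ∑ h ∈ S.erase g, |⟪g, h⟫| = ∑ h ∈ S.erase g, |⟪h, g⟫| :=
          Finset.sum_congr rfl fun x _ => by rw [real_inner_comm]
      _ ≤ 1/3 := coh_sum' hμlt hμ (hS hg) (erS g hg) (Finset.notMem_erase g S)
  set T : ℝ := ∑ g ∈ S, ⟪v, g⟫ ^ 2 with hT
  have hT0 : 0 ≤ T := Finset.sum_nonneg fun g _ => sq_nonneg _
  set w : H := ∑ g ∈ S, ⟪v, g⟫ • g with hw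
  have hvw : ⟪v, w⟫ = T := by
    rw [hw, inner_sum]
    exact Finset.sum_congr rfl fun g _ => by rw [real_inner_smul_right]; ring
  have hww : ⟪w, w⟫ = ∑ g ∈ S, (⟪v, g⟫ ^ 2 * ⟪g, g⟫ +
      ∑ h ∈ S.erase g, ⟪v, g⟫ * ⟪v, h⟫ * ⟪g, h⟫) := by
    rw [hw, sum_inner]
    refine Finset.sum_congr rfl fun g hg => ?_
    rw [real_inner_smul_left, inner_sum]
    have : ∑ h ∈ S, ⟪g, ⟪v, h⟫ • h⟫ = ∑ h ∈ S, ⟪v, h⟫ * ⟪g, h⟫ :=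
      Finset.sum_congr rfl fun h _ => by rw [real_inner_smul_right]
    rw [this, ← Finset.sum_erase_add S _ hg]
    have e3 : ∑ h ∈ S.erase g, ⟪v, g⟫ * ⟪v, h⟫ * ⟪g, h⟫
        = ⟪v, g⟫ * ∑ h ∈ S.erase g, ⟪v, h⟫ * ⟪g, h⟫ := by
      rw [Finset.mul_sum]; exact Finset.sum_congr rfl fun h _ => by ring
    rw [e3]; ring
  have hdiag : ∀ g ∈ S, ⟪v, g⟫ ^ 2 * ⟪g, g⟫ = ⟪v, g⟫ ^ 2 := by
    intro g hg
    rw [real_inner_self_eq_norm_mul_norm, hDnorm g (hS hg)]; ring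
  have hcross : ∀ g ∈ S, ∑ h ∈ S.erase g, ⟪v, g⟫ * ⟪v, h⟫ * ⟪g, h⟫ ≤
      ∑ h ∈ S.erase g, (⟪v, g⟫ ^ 2 / 2 + ⟪v, h⟫ ^ 2 / 2) * |⟪g, h⟫| := by
    intro g hg
    refine Finset.sum_le_sum fun h _ => ?_
    have h1 : ⟪v, g⟫ * ⟪v, h⟫ * ⟪g, h⟫ ≤ |⟪v, g⟫| * |⟪v, h⟫| * |⟪g, h⟫| := by
      calc ⟪v, g⟫ * ⟪v, h⟫ * ⟪g, h⟫ ≤ |⟪v, g⟫ * ⟪v, h⟫ * ⟪g, h⟫| := le_abs_self _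
        _ = |⟪v, g⟫| * |⟪v, h⟫| * |⟪g, h⟫| := by rw [abs_mul, abs_mul]
    refine le_trans h1 ?_
    have h2 : |⟪v, g⟫| * |⟪v, h⟫| ≤ ⟪v, g⟫ ^ 2 / 2 + ⟪v, h⟫ ^ 2 / 2 := by
      nlinarith [sq_nonneg (|⟪v, g⟫| - |⟪v, h⟫|), sq_abs ⟪v, g⟫, sq_abs ⟪v, h⟫]
    exact mul_le_mul_of_nonneg_right h2 (abs_nonneg _)
  have key : ⟪w, w⟫ ≤ (4/3) * T := by
    rw [hww]
    have hsplit : ∀ g ∈ S, ∑ h ∈ S.erase g, (⟪v, g⟫ ^ 2 / 2 + ⟪v, h⟫ ^ 2 / 2) * |⟪g, h⟫|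
        = (⟪v, g⟫ ^ 2 / 2) * (∑ h ∈ S.erase g, |⟪g, h⟫|)
          + ∑ h ∈ S.erase g, (⟪v, h⟫ ^ 2 / 2) * |⟪g, h⟫| := by
      intro g hg
      rw [Finset.mul_sum, ← Finset.sum_add_distrib]
      exact Finset.sum_congr rfl fun h _ => by ring
    have hA : ∑ g ∈ S, (⟪v, g⟫ ^ 2 / 2) * (∑ h ∈ S.erase g, |⟪g, h⟫|) ≤ (1/6) * T := by
      rw [hT, Finset.mul_sum]
      refine Finset.sum_le_sum fun g hg => ?_
      have := hrow g hg
      nlinarith [sq_nonneg ⟪v, g⟫]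
    have hB : ∑ g ∈ S, ∑ h ∈ S.erase g, (⟪v, h⟫ ^ 2 / 2) * |⟪g, h⟫| ≤ (1/6) * T := by
      rw [erase_swap S (fun g h => (⟪v, h⟫ ^ 2 / 2) * |⟪g, h⟫|)]
      rw [hT, Finset.mul_sum]
      refine Finset.sum_le_sum fun h hh => ?_
      have hcol : ∑ g ∈ S.erase h, |⟪g, h⟫| ≤ 1/3 :=
        coh_sum' hμlt hμ (hS hh) (erS h hh) (Finset.notMem_erase h S)
      calc ∑ g ∈ S.erase h, (⟪v, h⟫ ^ 2 / 2) * |⟪g, h⟫|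
          = (⟪v, h⟫ ^ 2 / 2) * ∑ g ∈ S.erase h, |⟪g, h⟫| := by rw [Finset.mul_sum]
        _ ≤ 1/6 * ⟪v, h⟫ ^ 2 := by nlinarith [sq_nonneg ⟪v, h⟫]
    calc ∑ g ∈ S, (⟪v, g⟫ ^ 2 * ⟪g, g⟫ + ∑ h ∈ S.erase g, ⟪v, g⟫ * ⟪v, h⟫ * ⟪g, h⟫)
        ≤ ∑ g ∈ S, (⟪v, g⟫ ^ 2 + ∑ h ∈ S.erase g, (⟪v, g⟫ ^ 2 / 2 + ⟪v, h⟫ ^ 2 / 2) * |⟪g, h⟫|) := by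
          refine Finset.sum_le_sum fun g hg => ?_
          rw [hdiag g hg]
          exact add_le_add_right (hcross g hg) _
      _ = ∑ g ∈ S, (⟪v, g⟫ ^ 2 + ((⟪v, g⟫ ^ 2 / 2) * (∑ h ∈ S.erase g, |⟪g, h⟫|)
            + ∑ h ∈ S.erase g, (⟪v, h⟫ ^ 2 / 2) * |⟪g, h⟫|)) :=
          Finset.sum_congr rfl fun g hg => by rw [hsplit g hg]
      _ = T + (∑ g ∈ S, (⟪v, g⟫ ^ 2 / 2) * (∑ h ∈ S.erase g, |⟪g, h⟫|)
            + ∑ g ∈ S, ∑ h ∈ S.erase g, (⟪v, h⟫ ^ 2 / 2) * |⟪g, h⟫|) := by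
          rw [Finset.sum_add_distrib, Finset.sum_add_distrib, hT]
      _ ≤ T + ((1/6) * T + (1/6) * T) := by linarith
      _ ≤ (4/3) * T := by linarith
  -- Cauchy-Schwarz
  have hcs : T ≤ ‖v‖ * ‖w‖ := by rw [← hvw]; exact real_inner_le_norm v w
  have hw2 : ‖w‖ ^ 2 ≤ (4/3) * T := by rw [← real_inner_self_eq_norm_sq]; exact key
  rcases eq_or_lt_of_le hT0 with h0 | h0
  · rw [← h0] at *; positivity
  · have h3 : T ^ 2 ≤ ‖v‖ ^ 2 * ((4/3) * T) := by
      calc T ^ 2 ≤ (‖v‖ * ‖w‖) ^ 2 := by nlinarith [norm_nonneg v, norm_nonneg w]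
        _ = ‖v‖ ^ 2 * ‖w‖ ^ 2 := by ring
        _ ≤ ‖v‖ ^ 2 * ((4/3) * T) := by nlinarith [sq_nonneg ‖v‖]
    nlinarith
end B

section C
variable {H : Type*} [NormedAddCommGroup H] [InnerProductSpace ℝ H]

lemma corr_lp {D : Set H} (hDnorm : ∀ g ∈ D, ‖g‖ = 1) {μ : ℝ} (hμlt : μ < 1/3)
    (hμ : ∀ g ∈ D, ∀ S : Finset H, ↑S ⊆ D → g ∉ S → ∑ h ∈ S, |⟪h, g⟫| ≤ μ)
    {p : ℝ} (hp1 : 1 ≤ p) {M : ℝ} (hM : 0 ≤ M) {f : H} (hf : f ∈ Aclass D p M)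
    {Γ : Finset H} (hΓ : ↑Γ ⊆ D) :
    ∑ g ∈ Γ, |⟪f, g⟫| ^ p ≤ (4/3 * M) ^ p := by
  have hp0 : (0:ℝ) < p := lt_of_lt_of_le zero_lt_one hp1
  have hclosed : IsClosed {x : H | ∑ g ∈ Γ, |⟪x, g⟫| ^ p ≤ (4/3 * M) ^ p} := by
    apply isClosed_le _ continuous_const
    apply continuous_finset_sum
    intro g _
    exact ((Continuous.inner continuous_id continuous_const).abs).rpow_const
      (fun x => Or.inr hp0.le)
  have hrep : repSet D p M ⊆ {x : H | ∑ g ∈ Γ, |⟪x, g⟫| ^ p ≤ (4/3 * M) ^ p} := by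
    rintro x ⟨S, c, hSD, hc, rfl⟩
    have habs : ∀ g : H, |⟪∑ l ∈ S, c l • l, g⟫| ≤ ∑ l ∈ S, |⟪l, g⟫| * |c l| := by
      intro g
      rw [sum_inner]
      refine le_trans (Finset.abs_sum_le_sum_abs _ _) ?_
      refine Finset.sum_le_sum fun l _ => ?_
      rw [real_inner_smul_left, abs_mul, mul_comm]
    simp only [Set.mem_setOf_eq]
    calc ∑ g ∈ Γ, |⟪∑ l ∈ S, c l • l, g⟫| ^ p
        ≤ ∑ g ∈ Γ, (∑ l ∈ S, |⟪l, g⟫| * |c l|) ^ p := by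
          refine Finset.sum_le_sum fun g _ => ?_
          exact Real.rpow_le_rpow (abs_nonneg _) (habs g) hp0.le
      _ ≤ ∑ g ∈ Γ, (4/3 : ℝ) ^ (p - 1) * ∑ l ∈ S, |⟪l, g⟫| * |c l| ^ p := by
          refine Finset.sum_le_sum fun g hg => ?_
          exact jensen_rpow S _ _ (fun l => abs_nonneg _) (fun l => abs_nonneg _) hp1
            (by norm_num) (rowsum_le hDnorm hμlt hμ (hΓ hg) hSD)
      _ = (4/3 : ℝ) ^ (p - 1) * ∑ l ∈ S, (∑ g ∈ Γ, |⟪l, g⟫|) * |c l| ^ p := by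
          rw [← Finset.mul_sum, Finset.sum_comm]
          congr 1
          exact Finset.sum_congr rfl fun l _ => by rw [← Finset.sum_mul]
      _ ≤ (4/3 : ℝ) ^ (p - 1) * ∑ l ∈ S, (4/3 : ℝ) * |c l| ^ p := by
          refine mul_le_mul_of_nonneg_left ?_ (Real.rpow_nonneg (by norm_num) _)
          refine Finset.sum_le_sum fun l hl => ?_
          exact mul_le_mul_of_nonneg_right (rowsum_le' hDnorm hμlt hμ (hSD hl) hΓ)
            (Real.rpow_nonneg (abs_nonneg _) _)
      _ = (4/3 : ℝ) ^ (p - 1) * (4/3 : ℝ) * ∑ l ∈ S, |c l| ^ p := by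
          rw [← Finset.mul_sum]; ring
      _ ≤ (4/3 : ℝ) ^ (p - 1) * (4/3 : ℝ) * M ^ p := by
          refine mul_le_mul_of_nonneg_left hc ?_
          positivity
      _ = (4/3 * M) ^ p := by
          rw [Real.mul_rpow (by norm_num) hM]
          congr 1
          rw [← Real.rpow_add_one (by norm_num : (4:ℝ)/3 ≠ 0) (p-1), sub_add_cancel]
  exact closure_minimal hrep hclosed hf

lemma dual_bound {D : Set H} (hDnorm : ∀ g ∈ D, ‖g‖ = 1) {μ : ℝ} (hμlt : μ < 1/3)
    (hμ : ∀ g ∈ D, ∀ S : Finset H, ↑S ⊆ D → g ∉ S → ∑ h ∈ S, |⟪h, g⟫| ≤ μ)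
    {p : ℝ} (hp1 : 1 ≤ p) (hp2 : p < 2)
    {N : ℝ} (hN : 0 ≤ N) {v : H} (hv : v ∈ Aclass D p N) {t : ℝ}
    (ht : ∀ g ∈ D, |⟪v, g⟫| ≤ t) (ht0 : 0 ≤ t) :
    ‖v‖ ^ 2 ≤ N * t ^ ((2 - p)/p) * ((4/3) * ‖v‖ ^ 2) ^ ((p - 1)/p) := by
  have hp0 : (0:ℝ) < p := lt_of_lt_of_le zero_lt_one hp1
  set R : ℝ := N * t ^ ((2 - p)/p) * ((4/3) * ‖v‖ ^ 2) ^ ((p - 1)/p) with hR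
  have hclosed : IsClosed {x : H | ⟪v, x⟫ ≤ R} :=
    isClosed_le (Continuous.inner continuous_const continuous_id) continuous_const
  have hrep : repSet D p N ⊆ {x : H | ⟪v, x⟫ ≤ R} := by
    rintro x ⟨S, d, hSD, hd, rfl⟩
    simp only [Set.mem_setOf_eq]
    have hterm : ∀ g ∈ S, |⟪v, g⟫| ≤ t ^ ((2 - p)/p) * (⟪v, g⟫ ^ 2) ^ ((p - 1)/p) := by
      intro g hg
      have hr : |⟪v, g⟫| ≤ t := ht g (hSD hg)
      have hsq : (⟪v, g⟫ ^ 2 : ℝ) ^ ((p - 1)/p) = |⟪v, g⟫| ^ (2 * ((p - 1)/p)) := by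
        rw [← sq_abs, ← Real.rpow_natCast |⟪v, g⟫| 2, ← Real.rpow_mul (abs_nonneg _)]
        norm_num
      rw [hsq]
      rcases eq_or_lt_of_le (abs_nonneg ⟪v, g⟫) with h0 | h0
      · rw [← h0]
        positivity
      · have hsplit : |⟪v, g⟫| = |⟪v, g⟫| ^ ((2 - p)/p) * |⟪v, g⟫| ^ (2 * ((p - 1)/p)) := by
          rw [← Real.rpow_add h0]
          have : (2 - p)/p + 2 * ((p - 1)/p) = 1 := by field_simp; ring
          rw [this, Real.rpow_one]
        nth_rewrite 1 [hsplit]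
        refine mul_le_mul_of_nonneg_right ?_ (Real.rpow_nonneg (abs_nonneg _) _)
        exact Real.rpow_le_rpow (abs_nonneg _) hr (div_nonneg (by linarith) hp0.le)
    have h1 : ⟪v, ∑ g ∈ S, d g • g⟫ ≤ ∑ g ∈ S, |d g| * |⟪v, g⟫| := by
      rw [inner_sum]
      refine le_trans (Finset.sum_le_sum fun g _ => le_abs_self _) ?_
      refine Finset.sum_le_sum fun g _ => ?_
      rw [real_inner_smul_right, abs_mul]
    have h2 : ∑ g ∈ S, |d g| * |⟪v, g⟫| ≤
        t ^ ((2 - p)/p) * ∑ g ∈ S, |d g| * (⟪v, g⟫ ^ 2) ^ ((p - 1)/p) := by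
      rw [Finset.mul_sum]
      refine Finset.sum_le_sum fun g hg => ?_
      calc |d g| * |⟪v, g⟫| ≤ |d g| * (t ^ ((2 - p)/p) * (⟪v, g⟫ ^ 2) ^ ((p - 1)/p)) :=
            mul_le_mul_of_nonneg_left (hterm g hg) (abs_nonneg _)
        _ = t ^ ((2 - p)/p) * (|d g| * (⟪v, g⟫ ^ 2) ^ ((p - 1)/p)) := by ring
    have hbes : ∑ g ∈ S, ⟪v, g⟫ ^ 2 ≤ (4/3) * ‖v‖ ^ 2 := bessel hDnorm hμlt hμ v hSD
    have h3 : ∑ g ∈ S, |d g| * (⟪v, g⟫ ^ 2) ^ ((p - 1)/p) ≤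
        N * ((4/3) * ‖v‖ ^ 2) ^ ((p - 1)/p) := by
      rcases eq_or_lt_of_le hp1 with hpe | hpl
      · -- p = 1
        subst hpe
        norm_num
        simp only [Real.rpow_one] at hd ⊢
        exact hd
      · have hp0' : p ≠ 0 := ne_of_gt hp0
        have hpp : (0:ℝ) < p - 1 := sub_pos.mpr hpl
        have hp1' : p - 1 ≠ 0 := ne_of_gt hpp
        have hq : Real.HolderConjugate p (p/(p-1)) := Real.HolderConjugate.conjExponent hpl
        have hf1 : ∀ i ∈ S, 0 ≤ |d i| := fun i _ => abs_nonneg _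
        have hg1 : ∀ i ∈ S, (0:ℝ) ≤ ((⟪v, i⟫ : ℝ) ^ 2) ^ ((p - 1)/p) :=
          fun i _ => Real.rpow_nonneg (sq_nonneg _) _
        have hold := Real.inner_le_Lp_mul_Lq_of_nonneg S hq hf1 hg1
        have e1 : (∑ i ∈ S, |d i| ^ p) ^ (1/p) ≤ N := by
          rw [one_div]
          calc (∑ i ∈ S, |d i| ^ p) ^ p⁻¹ ≤ (N ^ p) ^ p⁻¹ :=
              Real.rpow_le_rpow
                (Finset.sum_nonneg fun i _ => Real.rpow_nonneg (abs_nonneg _) _) hd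
                (by positivity)
            _ = N := Real.rpow_rpow_inv hN hp0'
        have e2 : ∀ i ∈ S, ((((⟪v, i⟫ : ℝ) ^ 2) ^ ((p - 1)/p)) ^ (p/(p-1)) : ℝ)
            = (⟪v, i⟫ : ℝ) ^ 2 := by
          intro i _
          rw [← Real.rpow_mul (sq_nonneg _)]
          have hee : (p - 1)/p * (p/(p-1)) = 1 := by field_simp
          rw [hee, Real.rpow_one]
        have e3 : (∑ i ∈ S, ((((⟪v, i⟫ : ℝ) ^ 2) ^ ((p-1)/p)) ^ (p/(p-1)) : ℝ)) ^ (1/(p/(p-1)))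
            ≤ ((4/3) * ‖v‖ ^ 2) ^ ((p - 1)/p) := by
          rw [Finset.sum_congr rfl e2]
          have h4 : (1:ℝ)/(p/(p-1)) = (p-1)/p := by rw [one_div, inv_div]
          rw [h4]
          exact Real.rpow_le_rpow (Finset.sum_nonneg fun i _ => sq_nonneg _) hbes
            (div_nonneg (by linarith) hp0.le)
        refine le_trans hold ?_
        exact mul_le_mul e1 e3
          (Real.rpow_nonneg (Finset.sum_nonneg fun i hi =>
            Real.rpow_nonneg (hg1 i hi) _) _) hN
    calc ⟪v, ∑ g ∈ S, d g • g⟫ ≤ ∑ g ∈ S, |d g| * |⟪v, g⟫| := h1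
      _ ≤ t ^ ((2 - p)/p) * ∑ g ∈ S, |d g| * (⟪v, g⟫ ^ 2) ^ ((p - 1)/p) := h2
      _ ≤ t ^ ((2 - p)/p) * (N * ((4/3) * ‖v‖ ^ 2) ^ ((p - 1)/p)) := by
          refine mul_le_mul_of_nonneg_left h3 (Real.rpow_nonneg ht0 _)
      _ = R := by rw [hR]; ring
  have : ⟪v, v⟫ ≤ R := closure_minimal hrep hclosed hv
  calc ‖v‖ ^ 2 = ⟪v, v⟫ := (real_inner_self_eq_norm_sq v).symm
    _ ≤ R := this
end C


lemma one_add_mul_le_rpow_neg {x r : ℝ} (hx0 : 0 < x) (hx1 : x < 1) (hr : 0 ≤ r) :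
    1 + r * x ≤ (1 - x) ^ (-r) := by
  have h1x : (0:ℝ) < 1 - x := by linarith
  have key : (1 - x) ^ r ≤ (1 + r * x)⁻¹ := by
    have h1 : (1 - x) ≤ Real.exp (-x) := by
      have := Real.add_one_le_exp (-x); linarith
    have h2 : (1 - x) ^ r ≤ Real.exp (-x) ^ r :=
      Real.rpow_le_rpow h1x.le h1 hr
    have h3 : Real.exp (-x) ^ r = Real.exp (-(x * r)) := by
      rw [← Real.exp_mul]; ring_nf
    have h4 : 1 + r * x ≤ Real.exp (x * r) := by
      have := Real.add_one_le_exp (x * r); linarith [this]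
    have h5 : Real.exp (-(x * r)) ≤ (1 + r * x)⁻¹ := by
      rw [Real.exp_neg]
      refine inv_anti₀ (by nlinarith) h4
    calc (1 - x) ^ r ≤ Real.exp (-x) ^ r := h2
      _ = Real.exp (-(x * r)) := h3
      _ ≤ (1 + r * x)⁻¹ := h5
  have hpos : (0:ℝ) < (1 - x) ^ r := Real.rpow_pos_of_pos h1x r
  have hrx : (0:ℝ) < 1 + r * x := by nlinarith
  rw [Real.rpow_neg h1x.le, ← one_div, le_div_iff₀ hpos]
  calc (1 + r * x) * (1 - x) ^ r ≤ (1 + r * x) * (1 + r * x)⁻¹ :=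
        mul_le_mul_of_nonneg_left key (by linarith)
    _ = 1 := mul_inv_cancel₀ (ne_of_gt hrx)

lemma recursion_solve {a : ℕ → ℝ} (ha0 : ∀ k, 0 ≤ a k) {L r : ℝ} (hL : 0 < L) (hr : 1 ≤ r)
    (hstep : ∀ k, a (k + 1) ≤ a k - a k ^ (1 + r) / L) :
    ∀ m : ℕ, 1 ≤ m → a m ≤ (L / m) ^ (1/r) := by
  have hr0 : (0:ℝ) < r := lt_of_lt_of_le zero_lt_one hr
  have claim : ∀ k : ℕ, a k = 0 ∨ (k : ℝ) * r / L ≤ a k ^ (-r) := by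
    intro k
    induction k with
    | zero =>
      right
      simp only [Nat.cast_zero, zero_mul, zero_div]
      exact Real.rpow_nonneg (ha0 0) _
    | succ n ih =>
      rcases ih with h0 | hb
      · left
        have := hstep n
        rw [h0, Real.zero_rpow (by positivity), zero_div, sub_zero] at this
        exact le_antisymm this (ha0 (n+1))
      · rcases eq_or_lt_of_le (ha0 (n+1)) with h0 | hpos
        · left; exact h0.symm
        · right
          have han : 0 < a n := by
            rcases eq_or_lt_of_le (ha0 n) with h0' | h0'
            · exfalso
              have := hstep n
              rw [← h0', Real.zero_rpow (by positivity), zero_div, sub_zero] at this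
              linarith
            · exact h0'
          set x : ℝ := a n ^ r / L with hx
          have hx0 : 0 < x := div_pos (Real.rpow_pos_of_pos han r) hL
          have hfact : a n ^ (1 + r) = a n * a n ^ r := by
            rw [Real.rpow_add han, Real.rpow_one]
          have hstep' : a (n+1) ≤ a n * (1 - x) := by
            have := hstep n
            rw [hfact] at this
            calc a (n+1) ≤ a n - a n * a n ^ r / L := this
              _ = a n * (1 - x) := by rw [hx]; ring
          have hx1 : x < 1 := by
            by_contra hc
            push_neg at hc
            have : a n * (1 - x) ≤ 0 := mul_nonpos_of_nonneg_of_nonpos han.le (by linarith)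
            linarith
          have hmono : a n ^ (-r) + r / L ≤ a (n+1) ^ (-r) := by
            have h1 : a (n+1) ^ (-r) ≥ (a n * (1 - x)) ^ (-r) := by
              refine Real.rpow_le_rpow_of_nonpos hpos hstep' (by linarith)
            have h2 : (a n * (1 - x)) ^ (-r) = a n ^ (-r) * (1 - x) ^ (-r) :=
              Real.mul_rpow han.le (by linarith)
            have h3 : (1:ℝ) + r * x ≤ (1 - x) ^ (-r) :=
              one_add_mul_le_rpow_neg hx0 hx1 hr0.le
            have h4 : a n ^ (-r) * (1 + r * x) ≤ a n ^ (-r) * (1 - x) ^ (-r) :=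
              mul_le_mul_of_nonneg_left h3 (Real.rpow_nonneg han.le _)
            have h5 : a n ^ (-r) * (1 + r * x) = a n ^ (-r) + r / L := by
              rw [hx]
              have : a n ^ (-r) * a n ^ r = 1 := by
                rw [← Real.rpow_add han]; simp
              field_simp
              nlinarith [this]
            calc a n ^ (-r) + r / L = a n ^ (-r) * (1 + r * x) := h5.symm
              _ ≤ a n ^ (-r) * (1 - x) ^ (-r) := h4
              _ ≤ a (n+1) ^ (-r) := by rw [← h2]; exact h1
          have : ((n:ℝ) + 1) * r / L = (n:ℝ) * r / L + r / L := by ring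
          push_cast
          rw [this]
          exact le_trans (add_le_add_left hb _) hmono
  intro m hm
  rcases claim m with h0 | hb
  · rw [h0]
    positivity
  · have hmpos : (0:ℝ) < m := by exact_mod_cast hm
    have h1 : (m:ℝ) / L ≤ a m ^ (-r) := by
      refine le_trans ?_ hb
      rw [div_le_div_iff₀ hL hL]
      nlinarith [mul_nonneg (mul_nonneg hmpos.le hL.le) (sub_nonneg.mpr hr)]
    have hinv : a m ^ r ≤ L / m := by
      have hml : (0:ℝ) < (m:ℝ) / L := div_pos hmpos hL
      rw [Real.rpow_neg (ha0 m)] at h1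
      have h3 := inv_anti₀ hml h1
      rw [inv_inv, inv_div] at h3
      exact h3
    calc a m = (a m ^ r) ^ (1/r) := by
          rw [one_div, Real.rpow_rpow_inv (ha0 m) (ne_of_gt hr0)]
      _ ≤ (L / m) ^ (1/r) := Real.rpow_le_rpow (Real.rpow_nonneg (ha0 m) r) hinv (by positivity)


section D
variable {H : Type*} [NormedAddCommGroup H] [InnerProductSpace ℝ H]

lemma pga_invariant {D : Set H} (hDnorm : ∀ g ∈ D, ‖g‖ = 1) (fs gs : ℕ → H)
    (hDg : ∀ m, gs (m + 1) ∈ D)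
    (hupd : ∀ m, fs (m + 1) = fs m - ⟪fs m, gs (m + 1)⟫ • gs (m + 1)) :
    ∀ (m : ℕ), ∀ g ∈ D,
      (∑ k ∈ (Finset.range m).filter (fun k => gs (k+1) = g), |⟪fs k, gs (k+1)⟫|)
        + |⟪fs m, g⟫|
      ≤ |⟪fs 0, g⟫| + ∑ k ∈ (Finset.range m).filter (fun k => gs (k+1) ≠ g),
          |⟪fs k, gs (k+1)⟫| * |⟪gs (k+1), g⟫| := by
  intro m
  induction m with
  | zero => intro g _; simp
  | succ n ih =>
    intro g hg
    have hrec : ⟪fs (n+1), g⟫ = ⟪fs n, g⟫ - ⟪fs n, gs (n+1)⟫ * ⟪gs (n+1), g⟫ := by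
      rw [hupd n, inner_sub_left, real_inner_smul_left]
    have hsplit1 : ∀ (P : ℕ → Prop) (F : ℕ → ℝ), (∀ k, Decidable (P k)) →
        True := fun _ _ _ => trivial
    by_cases hcase : gs (n+1) = g
    · have hA : (Finset.range (n+1)).filter (fun k => gs (k+1) = g)
          = insert n ((Finset.range n).filter (fun k => gs (k+1) = g)) := by
        rw [Finset.range_add_one, Finset.filter_insert, if_pos hcase]
      have hB : (Finset.range (n+1)).filter (fun k => gs (k+1) ≠ g)
          = (Finset.range n).filter (fun k => gs (k+1) ≠ g) := by
        rw [Finset.range_add_one, Finset.filter_insert, if_neg (by simpa using hcase)]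
      have hnotmem : n ∉ (Finset.range n).filter (fun k => gs (k+1) = g) :=
        fun hmem => absurd (Finset.mem_range.mp (Finset.mem_of_mem_filter n hmem))
          (lt_irrefl n)
      have hzero : ⟪fs (n+1), g⟫ = 0 := by
        rw [hrec, hcase]
        have : ⟪g, g⟫ = 1 := by
          rw [real_inner_self_eq_norm_mul_norm, hDnorm g hg]; norm_num
        rw [this]
        ring
      rw [hA, Finset.sum_insert hnotmem, hB, hzero, hcase]
      have := ih g hg
      simp only [abs_zero, add_zero]
      linarith
    · have hA : (Finset.range (n+1)).filter (fun k => gs (k+1) = g)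
          = (Finset.range n).filter (fun k => gs (k+1) = g) := by
        rw [Finset.range_add_one, Finset.filter_insert, if_neg hcase]
      have hB : (Finset.range (n+1)).filter (fun k => gs (k+1) ≠ g)
          = insert n ((Finset.range n).filter (fun k => gs (k+1) ≠ g)) := by
        rw [Finset.range_add_one, Finset.filter_insert, if_pos hcase]
      have hnotmem : n ∉ (Finset.range n).filter (fun k => gs (k+1) ≠ g) :=
        fun hmem => absurd (Finset.mem_range.mp (Finset.mem_of_mem_filter n hmem))
          (lt_irrefl n)
      rw [hA, hB, Finset.sum_insert hnotmem]
      have habs : |⟪fs (n+1), g⟫| ≤ |⟪fs n, g⟫| + |⟪fs n, gs (n+1)⟫| * |⟪gs (n+1), g⟫| := by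
        rw [hrec]
        calc |⟪fs n, g⟫ - ⟪fs n, gs (n+1)⟫ * ⟪gs (n+1), g⟫|
            ≤ |⟪fs n, g⟫| + |⟪fs n, gs (n+1)⟫ * ⟪gs (n+1), g⟫| := abs_sub _ _
          _ = |⟪fs n, g⟫| + |⟪fs n, gs (n+1)⟫| * |⟪gs (n+1), g⟫| := by rw [abs_mul]
      have := ih g hg
      linarith

lemma pga_sum (fs gs : ℕ → H)
    (hupd : ∀ m, fs (m + 1) = fs m - ⟪fs m, gs (m + 1)⟫ • gs (m + 1)) :
    ∀ m, fs m = fs 0 - ∑ k ∈ Finset.range m, ⟪fs k, gs (k+1)⟫ • gs (k+1) := by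
  intro m
  induction m with
  | zero => simp
  | succ n ih =>
    rw [hupd n, Finset.range_add_one, Finset.sum_insert Finset.notMem_range_self, ih]
    abel

lemma energy_step {D : Set H} (hDnorm : ∀ g ∈ D, ‖g‖ = 1) (fs gs : ℕ → H)
    (hDg : ∀ m, gs (m + 1) ∈ D)
    (hupd : ∀ m, fs (m + 1) = fs m - ⟪fs m, gs (m + 1)⟫ • gs (m + 1)) (m : ℕ) :
    ‖fs (m+1)‖ ^ 2 = ‖fs m‖ ^ 2 - ⟪fs m, gs (m+1)⟫ ^ 2 := by
  rw [hupd m]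
  rw [norm_sub_sq_real]
  rw [real_inner_smul_right, norm_smul]
  rw [hDnorm _ (hDg m)]
  simp [mul_pow, sq_abs]
  ring

lemma Aclass_zero {D : Set H} {p : ℝ} (hp : 1 ≤ p) {f : H} (hf : f ∈ Aclass D p 0) :
    f = 0 := by
  have hp0 : p ≠ 0 := by positivity
  have hrep : repSet D p 0 ⊆ {(0:H)} := by
    rintro x ⟨S, c, hS, hc, rfl⟩
    rw [Real.zero_rpow hp0] at hc
    have hall : ∀ g ∈ S, |c g| ^ p = 0 := by
      intro g hg
      have := (Finset.sum_eq_zero_iff_of_nonneg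
        (fun g _ => Real.rpow_nonneg (abs_nonneg (c g)) p)).mp
        (le_antisymm hc (Finset.sum_nonneg fun g _ => Real.rpow_nonneg (abs_nonneg (c g)) p))
      exact this g hg
    have : ∑ g ∈ S, c g • g = 0 := by
      refine Finset.sum_eq_zero fun g hg => ?_
      have h1 := hall g hg
      rw [Real.rpow_eq_zero (abs_nonneg _) hp0] at h1
      rw [abs_eq_zero.mp h1, zero_smul]
    simp [this]
  have : f ∈ ({(0:H)} : Set H) :=
    closure_minimal hrep isClosed_singleton hf
  simpa using this

lemma repSet_sub {D : Set H} {p M N : ℝ} (hp1 : 1 ≤ p) (hM : 0 ≤ M) (hN : 0 ≤ N)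
    {w u : H} (hw : w ∈ repSet D p M)
    {T : Finset H} (hT : ↑T ⊆ D) {β : H → ℝ} (hβ : ∑ h ∈ T, |β h| ^ p ≤ N ^ p)
    (hu : u = ∑ h ∈ T, β h • h) : w - u ∈ repSet D p (M + N) := by
  have hp0 : (0:ℝ) < p := lt_of_lt_of_le zero_lt_one hp1
  obtain ⟨S, c, hS, hc, rfl⟩ := hw
  refine ⟨S ∪ T, fun g => (if g ∈ S then c g else 0) - (if g ∈ T then β g else 0),
    ?_, ?_, ?_⟩
  · rw [Finset.coe_union]
    exact Set.union_subset hS hT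
  · -- Minkowski
    set α : H → ℝ := fun g => if g ∈ S then c g else 0 with hα
    set β' : H → ℝ := fun g => if g ∈ T then β g else 0 with hβ'
    have hSsum : ∑ g ∈ S ∪ T, |α g| ^ p = ∑ g ∈ S, |c g| ^ p := by
      rw [← Finset.sum_subset Finset.subset_union_left
        (fun x _ hx => by simp [hα, hx, Real.zero_rpow (ne_of_gt hp0)])]
      exact Finset.sum_congr rfl fun g hg => by simp [hα, hg]
    have hTsum : ∑ g ∈ S ∪ T, |β' g| ^ p = ∑ h ∈ T, |β h| ^ p := by
      rw [← Finset.sum_subset Finset.subset_union_right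
        (fun x _ hx => by simp [hβ', hx, Real.zero_rpow (ne_of_gt hp0)])]
      exact Finset.sum_congr rfl fun g hg => by simp [hβ', hg]
    have hmink := Real.Lp_add_le (S ∪ T) α (fun g => -β' g) hp1
    have key : (∑ g ∈ S ∪ T, |α g - β' g| ^ p) ^ (1/p) ≤ M + N := by
      have e1 : ∀ g, α g - β' g = α g + (-β' g) := fun g => by ring
      calc (∑ g ∈ S ∪ T, |α g - β' g| ^ p) ^ (1/p)
          = (∑ g ∈ S ∪ T, |α g + (-β' g)| ^ p) ^ (1/p) := by
            rw [Finset.sum_congr rfl (fun g _ => by rw [e1] :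
              ∀ g ∈ S ∪ T, |α g - β' g| ^ p = |α g + (-β' g)| ^ p)]
        _ ≤ (∑ g ∈ S ∪ T, |α g| ^ p) ^ (1/p) + (∑ g ∈ S ∪ T, |(-β' g)| ^ p) ^ (1/p) := hmink
        _ ≤ M + N := by
            have b1 : (∑ g ∈ S ∪ T, |α g| ^ p) ^ (1/p) ≤ M := by
              rw [hSsum, one_div]
              calc (∑ g ∈ S, |c g| ^ p) ^ p⁻¹ ≤ (M ^ p) ^ p⁻¹ :=
                  Real.rpow_le_rpow (Finset.sum_nonneg fun g _ =>
                    Real.rpow_nonneg (abs_nonneg _) p) hc (by positivity)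
                _ = M := Real.rpow_rpow_inv hM (ne_of_gt hp0)
            have b2 : (∑ g ∈ S ∪ T, |(-β' g)| ^ p) ^ (1/p) ≤ N := by
              have : ∑ g ∈ S ∪ T, |(-β' g)| ^ p = ∑ g ∈ S ∪ T, |β' g| ^ p :=
                Finset.sum_congr rfl fun g _ => by rw [abs_neg]
              rw [this, hTsum, one_div]
              calc (∑ h ∈ T, |β h| ^ p) ^ p⁻¹ ≤ (N ^ p) ^ p⁻¹ :=
                  Real.rpow_le_rpow (Finset.sum_nonneg fun g _ =>
                    Real.rpow_nonneg (abs_nonneg _) p) hβ (by positivity)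
                _ = N := Real.rpow_rpow_inv hN (ne_of_gt hp0)
            linarith
    have hsum_nonneg : (0:ℝ) ≤ ∑ g ∈ S ∪ T, |α g - β' g| ^ p :=
      Finset.sum_nonneg fun g _ => Real.rpow_nonneg (abs_nonneg _) p
    calc ∑ g ∈ S ∪ T, |α g - β' g| ^ p
        = ((∑ g ∈ S ∪ T, |α g - β' g| ^ p) ^ (1/p)) ^ p := by
          rw [one_div, Real.rpow_inv_rpow hsum_nonneg (ne_of_gt hp0)]
      _ ≤ (M + N) ^ p := Real.rpow_le_rpow
          (Real.rpow_nonneg hsum_nonneg _) key hp0.le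
  · rw [hu]
    have e1 : ∑ g ∈ S ∪ T, ((if g ∈ S then c g else 0) - (if g ∈ T then β g else 0)) • g
        = ∑ g ∈ S ∪ T, (if g ∈ S then c g else 0) • g
          - ∑ g ∈ S ∪ T, (if g ∈ T then β g else 0) • g := by
      rw [← Finset.sum_sub_distrib]
      exact Finset.sum_congr rfl fun g _ => by rw [sub_smul]
    have e2 : ∑ g ∈ S ∪ T, (if g ∈ S then c g else 0) • g = ∑ g ∈ S, c g • g := by
      rw [← Finset.sum_subset Finset.subset_union_left
        (fun x _ hx => by simp [hx])]
      exact Finset.sum_congr rfl fun g hg => by simp [hg]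
    have e3 : ∑ g ∈ S ∪ T, (if g ∈ T then β g else 0) • g = ∑ h ∈ T, β h • h := by
      rw [← Finset.sum_subset Finset.subset_union_right
        (fun x _ hx => by simp [hx])]
      exact Finset.sum_congr rfl fun g hg => by simp [hg]
    rw [e1, e2, e3]

lemma Aclass_sub {D : Set H} {p M N : ℝ} (hp1 : 1 ≤ p) (hM : 0 ≤ M) (hN : 0 ≤ N)
    {f u : H} (hf : f ∈ Aclass D p M)
    {T : Finset H} (hT : ↑T ⊆ D) {β : H → ℝ} (hβ : ∑ h ∈ T, |β h| ^ p ≤ N ^ p)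
    (hu : u = ∑ h ∈ T, β h • h) : f - u ∈ Aclass D p (M + N) := by
  have hcont : Continuous (fun x : H => x - u) := by continuity
  have hmaps : Set.MapsTo (fun x : H => x - u) (repSet D p M) (repSet D p (M + N)) :=
    fun w hw => repSet_sub hp1 hM hN hw hT hβ hu
  exact map_mem_closure (f := fun x : H => x - u) hcont hf hmaps

end D

section E
variable {H : Type*} [NormedAddCommGroup H] [InnerProductSpace ℝ H]

lemma sigma_lp {D : Set H} (hDnorm : ∀ g ∈ D, ‖g‖ = 1) {μ : ℝ} (hμlt : μ < 1/3)
    (hμ : ∀ g ∈ D, ∀ S : Finset H, ↑S ⊆ D → g ∉ S → ∑ h ∈ S, |⟪h, g⟫| ≤ μ)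
    {p : ℝ} (hp1 : 1 ≤ p) {M : ℝ} (hM : 0 ≤ M) (fs gs : ℕ → H)
    (hDg : ∀ m, gs (m + 1) ∈ D)
    (hupd : ∀ m, fs (m + 1) = fs m - ⟪fs m, gs (m + 1)⟫ • gs (m + 1))
    (hfA : fs 0 ∈ Aclass D p M) (m : ℕ) :
    ∑ g ∈ (Finset.range m).image (fun k => gs (k+1)),
      (∑ k ∈ (Finset.range m).filter (fun k => gs (k+1) = g), |⟪fs k, gs (k+1)⟫|) ^ p
      ≤ (2*M) ^ p := by
  have hp0 : (0:ℝ) < p := lt_of_lt_of_le zero_lt_one hp1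
  set Γ : Finset H := (Finset.range m).image (fun k => gs (k+1)) with hΓ
  have hΓD : ↑Γ ⊆ D := by
    intro g hg
    simp only [hΓ, Finset.coe_image, Set.mem_image] at hg
    obtain ⟨k, _, rfl⟩ := hg
    exact hDg k
  set σ : H → ℝ := fun g =>
    ∑ k ∈ (Finset.range m).filter (fun k => gs (k+1) = g), |⟪fs k, gs (k+1)⟫| with hσ
  have hσ0 : ∀ g, 0 ≤ σ g := fun g => Finset.sum_nonneg fun k _ => abs_nonneg _
  set y : H → ℝ := fun g => |⟪fs 0, g⟫| with hy
  set z : H → ℝ := fun g => ∑ h ∈ Γ.erase g, |⟪h, g⟫| * σ h with hz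
  have hz0 : ∀ g, 0 ≤ z g := fun g =>
    Finset.sum_nonneg fun h _ => mul_nonneg (abs_nonneg _) (hσ0 h)
  -- componentwise bound
  have hcomp : ∀ g ∈ Γ, σ g ≤ y g + z g := by
    intro g hg
    have hgD : g ∈ D := hΓD hg
    have hinv := pga_invariant hDnorm fs gs hDg hupd m g hgD
    have hfib : ∑ k ∈ (Finset.range m).filter (fun k => gs (k+1) ≠ g),
        |⟪fs k, gs (k+1)⟫| * |⟪gs (k+1), g⟫| = z g := by
      rw [hz]
      rw [← Finset.sum_fiberwise_of_maps_to (g := fun k => gs (k+1))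
        (t := Γ.erase g) ?hmap (fun k => |⟪fs k, gs (k+1)⟫| * |⟪gs (k+1), g⟫|)]
      case hmap =>
        intro k hk
        rw [Finset.mem_filter] at hk
        exact Finset.mem_erase.mpr ⟨hk.2, Finset.mem_image_of_mem _ hk.1⟩
      refine Finset.sum_congr rfl fun h hh => ?_
      have hne : h ≠ g := (Finset.mem_erase.mp hh).1
      have hfilter : ((Finset.range m).filter (fun k => gs (k+1) ≠ g)).filter
          (fun k => gs (k+1) = h) = (Finset.range m).filter (fun k => gs (k+1) = h) := by
        rw [Finset.filter_filter]
        apply Finset.filter_congr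
        intro k _
        constructor
        · exact fun ⟨_, h2⟩ => h2
        · exact fun h2 => ⟨by rw [h2]; exact hne, h2⟩
      rw [hfilter]
      have : ∀ k ∈ (Finset.range m).filter (fun k => gs (k+1) = h),
          |⟪fs k, gs (k+1)⟫| * |⟪gs (k+1), g⟫| = |⟪fs k, gs (k+1)⟫| * |⟪h, g⟫| := by
        intro k hk
        rw [(Finset.mem_filter.mp hk).2]
      rw [Finset.sum_congr rfl this, ← Finset.sum_mul]
      ring
    have habs : 0 ≤ |⟪fs m, g⟫| := abs_nonneg _
    rw [hfib] at hinv
    calc σ g ≤ σ g + |⟪fs m, g⟫| := by linarith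
      _ ≤ y g + z g := hinv
  -- lp bounds
  set P : ℝ := ∑ g ∈ Γ, σ g ^ p with hP
  have hP0 : 0 ≤ P := Finset.sum_nonneg fun g _ => Real.rpow_nonneg (hσ0 g) p
  have hy_lp : ∑ g ∈ Γ, y g ^ p ≤ (4/3*M) ^ p :=
    corr_lp hDnorm hμlt hμ hp1 hM hfA hΓD
  have hz_lp : ∑ g ∈ Γ, z g ^ p ≤ (1/3:ℝ) ^ p * P := by
    have hrow : ∀ g ∈ Γ, z g ^ p ≤ (1/3:ℝ) ^ (p-1) * ∑ h ∈ Γ.erase g, |⟪h, g⟫| * σ h ^ p := by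
      intro g hg
      refine jensen_rpow (Γ.erase g) _ _ (fun h => abs_nonneg _) hσ0 hp1 (by norm_num) ?_
      exact coh_sum' hμlt hμ (hΓD hg)
        (Set.Subset.trans (Finset.coe_subset.mpr (Finset.erase_subset g Γ)) hΓD)
        (Finset.notMem_erase g Γ)
    calc ∑ g ∈ Γ, z g ^ p
        ≤ ∑ g ∈ Γ, (1/3:ℝ) ^ (p-1) * ∑ h ∈ Γ.erase g, |⟪h, g⟫| * σ h ^ p :=
          Finset.sum_le_sum hrow
      _ = (1/3:ℝ) ^ (p-1) * ∑ g ∈ Γ, ∑ h ∈ Γ.erase g, |⟪h, g⟫| * σ h ^ p := by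
          rw [← Finset.mul_sum]
      _ = (1/3:ℝ) ^ (p-1) * ∑ h ∈ Γ, ∑ g ∈ Γ.erase h, |⟪h, g⟫| * σ h ^ p := by
          rw [erase_swap Γ (fun g h => |⟪h, g⟫| * σ h ^ p)]
      _ ≤ (1/3:ℝ) ^ (p-1) * ∑ h ∈ Γ, (1/3) * σ h ^ p := by
          refine mul_le_mul_of_nonneg_left ?_ (Real.rpow_nonneg (by norm_num) _)
          refine Finset.sum_le_sum fun h hh => ?_
          have hcol : ∑ g ∈ Γ.erase h, |⟪h, g⟫| ≤ 1/3 := by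
            calc ∑ g ∈ Γ.erase h, |⟪h, g⟫| = ∑ g ∈ Γ.erase h, |⟪g, h⟫| :=
                  Finset.sum_congr rfl fun g _ => by rw [real_inner_comm]
              _ ≤ 1/3 := coh_sum' hμlt hμ (hΓD hh)
                  (Set.Subset.trans (Finset.coe_subset.mpr (Finset.erase_subset h Γ)) hΓD)
                  (Finset.notMem_erase h Γ)
          calc ∑ g ∈ Γ.erase h, |⟪h, g⟫| * σ h ^ p
              = (∑ g ∈ Γ.erase h, |⟪h, g⟫|) * σ h ^ p := by rw [Finset.sum_mul]
            _ ≤ (1/3) * σ h ^ p := mul_le_mul_of_nonneg_right hcol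
                (Real.rpow_nonneg (hσ0 h) p)
      _ = (1/3:ℝ) ^ p * P := by
          rw [← Finset.mul_sum, ← hP, ← mul_assoc]
          congr 1
          rw [← Real.rpow_add_one (by norm_num : (1/3:ℝ) ≠ 0) (p-1), sub_add_cancel]
  -- Minkowski
  have hmink : P ^ (1/p) ≤ 4/3*M + (1/3) * P ^ (1/p) := by
    have h1 : P ≤ ∑ g ∈ Γ, (y g + z g) ^ p := by
      rw [hP]
      refine Finset.sum_le_sum fun g hg => ?_
      exact Real.rpow_le_rpow (hσ0 g) (hcomp g hg) hp0.le
    have h2 : (∑ g ∈ Γ, (y g + z g) ^ p) ^ (1/p) ≤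
        (∑ g ∈ Γ, y g ^ p) ^ (1/p) + (∑ g ∈ Γ, z g ^ p) ^ (1/p) :=
      Real.Lp_add_le_of_nonneg Γ hp1 (fun g _ => abs_nonneg _) (fun g _ => hz0 g)
    have h3 : (∑ g ∈ Γ, y g ^ p) ^ (1/p) ≤ 4/3*M := by
      rw [one_div]
      calc (∑ g ∈ Γ, y g ^ p) ^ p⁻¹ ≤ ((4/3*M) ^ p) ^ p⁻¹ :=
          Real.rpow_le_rpow (Finset.sum_nonneg fun g _ =>
            Real.rpow_nonneg (abs_nonneg _) p) hy_lp (by positivity)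
        _ = 4/3*M := Real.rpow_rpow_inv (by positivity) (ne_of_gt hp0)
    have h4 : (∑ g ∈ Γ, z g ^ p) ^ (1/p) ≤ (1/3) * P ^ (1/p) := by
      calc (∑ g ∈ Γ, z g ^ p) ^ (1/p) ≤ ((1/3:ℝ) ^ p * P) ^ (1/p) :=
          Real.rpow_le_rpow (Finset.sum_nonneg fun g _ =>
            Real.rpow_nonneg (hz0 g) p) hz_lp (by positivity)
        _ = (1/3) * P ^ (1/p) := by
            rw [Real.mul_rpow (Real.rpow_nonneg (by norm_num) _) hP0]
            congr 1
            rw [show (1:ℝ)/p = p⁻¹ from one_div p]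
            exact Real.rpow_rpow_inv (by norm_num) (ne_of_gt hp0)
    calc P ^ (1/p) ≤ (∑ g ∈ Γ, (y g + z g) ^ p) ^ (1/p) :=
        Real.rpow_le_rpow hP0 h1 (by positivity)
      _ ≤ (∑ g ∈ Γ, y g ^ p) ^ (1/p) + (∑ g ∈ Γ, z g ^ p) ^ (1/p) := h2
      _ ≤ 4/3*M + (1/3) * P ^ (1/p) := add_le_add h3 h4
  have hs : P ^ (1/p) ≤ 2*M := by linarith
  calc P = (P ^ (1/p)) ^ p := by
        rw [one_div, Real.rpow_inv_rpow hP0 (ne_of_gt hp0)]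
    _ ≤ (2*M) ^ p := Real.rpow_le_rpow (Real.rpow_nonneg hP0 _) hs hp0.le

lemma resid_mem {D : Set H} (hDnorm : ∀ g ∈ D, ‖g‖ = 1) {μ : ℝ} (hμlt : μ < 1/3)
    (hμ : ∀ g ∈ D, ∀ S : Finset H, ↑S ⊆ D → g ∉ S → ∑ h ∈ S, |⟪h, g⟫| ≤ μ)
    {p : ℝ} (hp1 : 1 ≤ p) {M : ℝ} (hM : 0 ≤ M) (fs gs : ℕ → H)
    (hDg : ∀ m, gs (m + 1) ∈ D)
    (hupd : ∀ m, fs (m + 1) = fs m - ⟪fs m, gs (m + 1)⟫ • gs (m + 1))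
    (hfA : fs 0 ∈ Aclass D p M) (m : ℕ) :
    fs m ∈ Aclass D p (M + 2*M) := by
  have hp0 : (0:ℝ) < p := lt_of_lt_of_le zero_lt_one hp1
  set Γ : Finset H := (Finset.range m).image (fun k => gs (k+1)) with hΓ
  have hΓD : ↑Γ ⊆ D := by
    intro g hg
    simp only [hΓ, Finset.coe_image, Set.mem_image] at hg
    obtain ⟨k, _, rfl⟩ := hg
    exact hDg k
  set β : H → ℝ := fun h =>
    ∑ k ∈ (Finset.range m).filter (fun k => gs (k+1) = h), ⟪fs k, gs (k+1)⟫ with hβdef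
  have hgroup : ∑ k ∈ Finset.range m, ⟪fs k, gs (k+1)⟫ • gs (k+1) = ∑ h ∈ Γ, β h • h := by
    rw [← Finset.sum_fiberwise_of_maps_to (g := fun k => gs (k+1)) (t := Γ)
      (fun k hk => Finset.mem_image_of_mem _ hk)
      (fun k => ⟪fs k, gs (k+1)⟫ • gs (k+1))]
    refine Finset.sum_congr rfl fun h hh => ?_
    have : ∀ k ∈ (Finset.range m).filter (fun k => gs (k+1) = h),
        ⟪fs k, gs (k+1)⟫ • gs (k+1) = ⟪fs k, gs (k+1)⟫ • h := by
      intro k hk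
      rw [(Finset.mem_filter.mp hk).2]
    rw [Finset.sum_congr rfl this, ← Finset.sum_smul]
  have hβlp : ∑ h ∈ Γ, |β h| ^ p ≤ (2*M) ^ p := by
    refine le_trans ?_ (sigma_lp hDnorm hμlt hμ hp1 hM fs gs hDg hupd hfA m)
    refine Finset.sum_le_sum fun h hh => ?_
    refine Real.rpow_le_rpow (abs_nonneg _) ?_ hp0.le
    exact Finset.abs_sum_le_sum_abs _ _
  have := Aclass_sub hp1 hM (by linarith : (0:ℝ) ≤ 2*M) hfA hΓD hβlp rfl
  rw [pga_sum fs gs hupd m, hgroup]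
  exact this

end E
/-- Theorem 2: for a dictionary with `μ₁(D) < 1/3` and `1 ≤ p < 2`, there are
constants `C₁ = C₁(p) > 0`, `C₂ = C₂(μ₁(D)) > 0` such that for every
`f ∈ A^p(D)` the PGA residuals satisfy
`‖f - G_m^{PGA}(f,D)‖ ≤ C₁ C₂ |f|_p m^{-1/p+1/2}` for all `m ≥ 1`. -/
theorem pga_rate_Ap
    {H : Type*} [NormedAddCommGroup H] [InnerProductSpace ℝ H] [CompleteSpace H]
    [TopologicalSpace.SeparableSpace H]
    (D : Set H) (hDnorm : ∀ g ∈ D, ‖g‖ = 1)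
    (hDdense : Dense (↑(Submodule.span ℝ D) : Set H))
    (p : ℝ) (hp1 : 1 ≤ p) (hp2 : p < 2)
    (μ : ℝ) (hμlt : μ < 1 / 3)
    (hμ : ∀ g ∈ D, ∀ S : Finset H, ↑S ⊆ D → g ∉ S →
      ∑ h ∈ S, |⟪h, g⟫| ≤ μ) :
    ∃ C₁ > (0 : ℝ), ∃ C₂ > (0 : ℝ),
      ∀ f : H, (∃ M : ℝ, 0 ≤ M ∧ f ∈ Aclass D p M) →
      ∀ fs gs : ℕ → H, fs 0 = f →
      (∀ m, gs (m + 1) ∈ D) →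
      (∀ m, ∀ g ∈ D, |⟪fs m, g⟫| ≤ |⟪fs m, gs (m + 1)⟫|) →
      (∀ m, fs (m + 1) = fs m - ⟪fs m, gs (m + 1)⟫ • gs (m + 1)) →
      ∀ m : ℕ, 1 ≤ m →
        ‖fs m‖ ≤ C₁ * C₂ * Anorm D p f * (m : ℝ) ^ (-1 / p + 1 / 2 : ℝ) := by
  have hμlt' : μ < 1/3 := by linarith
  refine ⟨4, by norm_num, 1, by norm_num, ?_⟩
  intro f hfex fs gs hfs0 hDg hmax hupd m hm
  have hp0 : (0:ℝ) < p := lt_of_lt_of_le zero_lt_one hp1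
  have hmR : (0:ℝ) < (m:ℝ) := by exact_mod_cast hm
  set κ : ℝ := -1 / p + 1 / 2 with hκ
  have hpow : (0:ℝ) < (m:ℝ) ^ κ := Real.rpow_pos_of_pos hmR κ
  have claim : ∀ M : ℝ, 0 ≤ M → f ∈ Aclass D p M → ‖fs m‖ ≤ 4 * M * (m:ℝ) ^ κ := by
    intro M hM hfM
    rcases eq_or_lt_of_le hM with h0 | hMpos
    · have hf0 : f = 0 := Aclass_zero hp1 (by rw [← h0] at hfM; exact hfM)
      have hzero : ∀ k, fs k = 0 := by
        intro k
        induction k with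
        | zero => rw [hfs0, hf0]
        | succ n ih => rw [hupd n, ih]; simp
      rw [hzero m, ← h0]
      simp
    · have hfs0A : fs 0 ∈ Aclass D p M := by rw [hfs0]; exact hfM
      set r : ℝ := p / (2 - p) with hr
      have h2p : (0:ℝ) < 2 - p := by linarith
      have hr1 : 1 ≤ r := by rw [hr, le_div_iff₀ h2p]; linarith
      have hr0 : (0:ℝ) < r := lt_of_lt_of_le zero_lt_one hr1
      set L : ℝ := (4*M) ^ (2*r : ℝ) with hL
      have h4M : (0:ℝ) < 4*M := by linarith
      have hL0 : (0:ℝ) < L := Real.rpow_pos_of_pos h4M _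
      set a : ℕ → ℝ := fun k => ‖fs k‖ ^ 2 with ha
      have ha0 : ∀ k, 0 ≤ a k := fun k => sq_nonneg _
      have hstep : ∀ k, a (k+1) ≤ a k - a k ^ ((1:ℝ)+r) / L := by
        intro k
        have hen : a (k+1) = a k - ⟪fs k, gs (k+1)⟫ ^ 2 :=
          energy_step hDnorm fs gs hDg hupd k
        have hkey : a k ^ ((1:ℝ)+r) / L ≤ ⟪fs k, gs (k+1)⟫ ^ 2 := by
          set t : ℝ := |⟪fs k, gs (k+1)⟫| with htdef
          have ht0 : 0 ≤ t := abs_nonneg _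
          have hAk : fs k ∈ Aclass D p (M + 2*M) :=
            resid_mem hDnorm hμlt' hμ hp1 hM fs gs hDg hupd hfs0A k
          have hd := dual_bound hDnorm hμlt' hμ hp1 hp2
            (by linarith : (0:ℝ) ≤ M + 2*M) hAk (fun g hg => hmax k g hg) ht0
          -- hd : ‖fs k‖^2 ≤ (M+2M) * t^((2-p)/p) * ((4/3)*‖fs k‖^2)^((p-1)/p)
          set A : ℝ := (2-p)/p with hA
          set B : ℝ := (p-1)/p with hB
          have hA0 : 0 ≤ A := div_nonneg (by linarith) hp0.le
          have hB0 : 0 ≤ B := div_nonneg (by linarith) hp0.le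
          have hd2 : a k ≤ 4*M * t ^ A * a k ^ B := by
            have e1 : ((4/3)*(a k)) ^ B = (4/3:ℝ) ^ B * a k ^ B :=
              Real.mul_rpow (by norm_num) (ha0 k)
            have e2 : (4/3:ℝ) ^ B ≤ 4/3 := by
              calc (4/3:ℝ) ^ B ≤ (4/3:ℝ) ^ (1:ℝ) :=
                  Real.rpow_le_rpow_of_exponent_le (by norm_num)
                    (by rw [hB, div_le_one hp0]; linarith)
                _ = 4/3 := Real.rpow_one _
            calc a k ≤ (M + 2*M) * t ^ A * ((4/3)*(a k)) ^ B := hd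
              _ = ((M + 2*M) * (4/3:ℝ) ^ B) * (t ^ A * a k ^ B) := by rw [e1]; ring
              _ ≤ (4*M) * (t ^ A * a k ^ B) := by
                  refine mul_le_mul_of_nonneg_right ?_
                    (mul_nonneg (Real.rpow_nonneg ht0 _) (Real.rpow_nonneg (ha0 k) _))
                  nlinarith [e2, Real.rpow_nonneg (show (0:ℝ) ≤ 4/3 by norm_num) B]
              _ = 4*M * t ^ A * a k ^ B := by ring
          rcases eq_or_lt_of_le (ha0 k) with hz | hz
          · rw [← hz, Real.zero_rpow (by positivity), zero_div]
            exact sq_nonneg _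
          · have hapB : (0:ℝ) < a k ^ B := Real.rpow_pos_of_pos hz B
            have h5 : a k ^ ((1:ℝ)/p) ≤ 4*M * t ^ A := by
              have e3 : a k = a k ^ ((1:ℝ)/p) * a k ^ B := by
                rw [← Real.rpow_add hz]
                have : (1:ℝ)/p + B = 1 := by rw [hB]; field_simp; ring
                rw [this, Real.rpow_one]
              refine le_of_mul_le_mul_right ?_ hapB
              calc a k ^ ((1:ℝ)/p) * a k ^ B = a k := e3.symm
                _ ≤ 4*M * t ^ A * a k ^ B := hd2
            have h6 : (a k ^ ((1:ℝ)/p)) ^ (2*r : ℝ) ≤ (4*M * t ^ A) ^ (2*r : ℝ) :=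
              Real.rpow_le_rpow (Real.rpow_nonneg (ha0 k) _) h5 (by positivity)
            have e4 : (a k ^ ((1:ℝ)/p)) ^ (2*r : ℝ) = a k ^ ((1:ℝ)+r) := by
              rw [← Real.rpow_mul (ha0 k)]
              congr 1
              rw [hr]; field_simp; ring
            have e5 : (4*M * t ^ A) ^ (2*r : ℝ) = L * ⟪fs k, gs (k+1)⟫ ^ 2 := by
              rw [Real.mul_rpow h4M.le (Real.rpow_nonneg ht0 _), ← Real.rpow_mul ht0]
              have : A * (2*r) = 2 := by rw [hA, hr]; field_simp
              rw [this, hL]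
              congr 1
              rw [show ((2:ℝ) : ℝ) = ((2:ℕ) : ℝ) by norm_num, Real.rpow_natCast, sq_abs]
            rw [div_le_iff₀ hL0]
            calc a k ^ ((1:ℝ)+r) = (a k ^ ((1:ℝ)/p)) ^ (2*r : ℝ) := e4.symm
              _ ≤ (4*M * t ^ A) ^ (2*r : ℝ) := h6
              _ = L * ⟪fs k, gs (k+1)⟫ ^ 2 := e5
              _ = ⟪fs k, gs (k+1)⟫ ^ 2 * L := by ring
        linarith
      have hrec := recursion_solve ha0 hL0 hr1 hstep m hm
      have hnorm : ‖fs m‖ = (a m) ^ ((1:ℝ)/2) := by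
        rw [show a m = ‖fs m‖ ^ 2 from rfl]
        rw [show (‖fs m‖:ℝ) ^ (2:ℕ) = ‖fs m‖ ^ ((2:ℕ):ℝ) from (Real.rpow_natCast _ 2).symm]
        rw [← Real.rpow_mul (norm_nonneg _)]
        norm_num
      have hLm0 : (0:ℝ) ≤ L / m := div_nonneg hL0.le hmR.le
      have hbound : ‖fs m‖ ≤ (L / m) ^ ((1:ℝ)/(2*r)) := by
        rw [hnorm]
        calc (a m) ^ ((1:ℝ)/2) ≤ ((L/m) ^ ((1:ℝ)/r)) ^ ((1:ℝ)/2) :=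
            Real.rpow_le_rpow (ha0 m) hrec (by norm_num)
          _ = (L/m) ^ ((1:ℝ)/(2*r)) := by
              rw [← Real.rpow_mul hLm0]
              congr 1
              field_simp
      have hfinal : (L / m) ^ ((1:ℝ)/(2*r)) = 4*M * (m:ℝ) ^ κ := by
        rw [Real.div_rpow hL0.le hmR.le, hL, ← Real.rpow_mul h4M.le]
        have e6 : (2*r) * ((1:ℝ)/(2*r)) = 1 := by
          field_simp
        rw [e6, Real.rpow_one]
        rw [div_eq_mul_inv, ← Real.rpow_neg hmR.le]
        congr 1
        rw [hκ, hr]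
        field_simp
        ring
      rw [hfinal] at hbound
      exact hbound
  obtain ⟨M₀, hM₀, hfA₀⟩ := hfex
  have hne : Set.Nonempty {M | 0 ≤ M ∧ f ∈ Aclass D p M} := ⟨M₀, hM₀, hfA₀⟩
  have hlb : ∀ M ∈ {M | 0 ≤ M ∧ f ∈ Aclass D p M}, ‖fs m‖ / (4 * (m:ℝ) ^ κ) ≤ M := by
    rintro M ⟨h1, h2⟩
    rw [div_le_iff₀ (by positivity)]
    calc ‖fs m‖ ≤ 4 * M * (m:ℝ) ^ κ := claim M h1 h2
      _ = M * (4 * (m:ℝ) ^ κ) := by ring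
  have hinf : ‖fs m‖ / (4 * (m:ℝ) ^ κ) ≤ Anorm D p f := le_csInf hne hlb
  calc ‖fs m‖ = (‖fs m‖ / (4 * (m:ℝ) ^ κ)) * (4 * (m:ℝ) ^ κ) := by
        field_simp
    _ ≤ Anorm D p f * (4 * (m:ℝ) ^ κ) :=
        mul_le_mul_of_nonneg_right hinf (by positivity)
    _ = 4 * 1 * Anorm D p f * (m:ℝ) ^ κ := by ring
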